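/- arXiv:1508.07634 — 4 statements merged into one kernel-verified Lean document; each statement's English description precedes it below -/
import Mathlib

section
/- For the GGPS pdf f(x) = (θαβ/C(θ)) e^{γx}(1-t)t^{α-1} C'(θ t^α) with t = 1-e^{-(β/γ)(e^{γx}-1)}: lim_{x→0⁺} f(x) = ∞ if 0 < α < 1, lim_{x→0⁺} f(x) = C'(0)θβ/C(θ) if α = 1, and lim_{x→0⁺} f(x) = 0 if α > 1. -/
open Real Filter Set
open scoped Topology

theorem ggps_pdf_limit_at_zero (α β γ θ Cθ : ℝ) (D : ℝ → ℝ)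
    (hα : 0 < α) (hβ : 0 < β) (hγ : 0 < γ) (hθ : 0 < θ) (hCθ : 0 < Cθ)
    (hD : ContinuousAt D 0) (hD0 : 0 < D 0) :
    let t : ℝ → ℝ := fun x => 1 - Real.exp (-(β / γ) * (Real.exp (γ * x) - 1))
    let f : ℝ → ℝ := fun x =>
      θ * α * β / Cθ * Real.exp (γ * x) * (1 - t x) * (t x) ^ (α - 1) * D (θ * (t x) ^ α)
    (α < 1 → Tendsto f (nhdsWithin 0 (Set.Ioi 0)) atTop) ∧
    (α = 1 → Tendsto f (nhdsWithin 0 (Set.Ioi 0)) (nhds (D 0 * θ * β / Cθ))) ∧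
    (1 < α → Tendsto f (nhdsWithin 0 (Set.Ioi 0)) (nhds 0)) := by
  intro t f
  -- basic limits
  have htc : Tendsto t (𝓝[>] (0:ℝ)) (𝓝 0) := by
    have : Continuous t := by
      unfold t; continuity
    have h0 : t 0 = 0 := by simp [t]
    have := this.continuousAt (x := (0:ℝ))
    rw [ContinuousAt, h0] at this
    exact this.mono_left nhdsWithin_le_nhds
  have htpos : ∀ x ∈ Ioi (0:ℝ), 0 < t x := by
    intro x hx
    have h1 : (1:ℝ) < Real.exp (γ * x) := by
      have := Real.exp_lt_exp.2 (mul_pos hγ (mem_Ioi.mp hx))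
      rwa [Real.exp_zero] at this
    have h2 : -(β / γ) * (Real.exp (γ * x) - 1) < 0 := by
      have hb : 0 < β / γ := by positivity
      nlinarith
    have : Real.exp (-(β / γ) * (Real.exp (γ * x) - 1)) < 1 := by
      have := Real.exp_lt_exp.2 h2
      rwa [Real.exp_zero] at this
    simpa [t] using this
  have htw : Tendsto t (𝓝[>] (0:ℝ)) (𝓝[>] 0) := by
    refine tendsto_nhdsWithin_iff.2 ⟨htc, ?_⟩
    exact eventually_nhdsWithin_of_forall htpos
  have hexp : Tendsto (fun x => Real.exp (γ * x)) (𝓝[>] (0:ℝ)) (𝓝 1) := by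
    have : Continuous fun x : ℝ => Real.exp (γ * x) := by continuity
    have := this.continuousAt (x := (0:ℝ))
    rw [ContinuousAt] at this
    simpa using this.mono_left nhdsWithin_le_nhds
  have h1t : Tendsto (fun x => 1 - t x) (𝓝[>] (0:ℝ)) (𝓝 1) := by
    simpa using (tendsto_const_nhds (x := (1:ℝ))).sub htc
  have hDcomp : Tendsto (fun x => D (θ * (t x) ^ α)) (𝓝[>] (0:ℝ)) (𝓝 (D 0)) := by
    have hpow : Tendsto (fun s : ℝ => s ^ α) (𝓝[>] (0:ℝ)) (𝓝 0) := by
      have := (Real.continuousAt_rpow_const 0 α (Or.inr hα.le))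
      rw [ContinuousAt, Real.zero_rpow hα.ne'] at this
      exact this.mono_left nhdsWithin_le_nhds
    have : Tendsto (fun x => θ * (t x) ^ α) (𝓝[>] (0:ℝ)) (𝓝 0) := by
      simpa using (tendsto_const_nhds (x := θ)).mul (hpow.comp htw)
    exact hD.tendsto.comp this
  refine ⟨?_, ?_, ?_⟩
  · -- α < 1 : atTop
    intro hlt
    have hpow : Tendsto (fun x => (t x) ^ (α - 1)) (𝓝[>] (0:ℝ)) atTop := by
      have hp : 0 < 1 - α := by linarith
      have h1 : Tendsto (fun s : ℝ => s ^ (1 - α)) (𝓝[>] (0:ℝ)) (𝓝[>] 0) := by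
        refine tendsto_nhdsWithin_iff.2 ⟨?_, ?_⟩
        · have := (Real.continuousAt_rpow_const 0 (1 - α) (Or.inr hp.le))
          rw [ContinuousAt, Real.zero_rpow hp.ne'] at this
          exact this.mono_left nhdsWithin_le_nhds
        · exact eventually_nhdsWithin_of_forall fun s hs => Real.rpow_pos_of_pos hs _
      have h2 : Tendsto (fun s : ℝ => (s ^ (1 - α))⁻¹) (𝓝[>] (0:ℝ)) atTop :=
        tendsto_inv_nhdsGT_zero.comp h1
      have h3 : Tendsto (fun x => ((t x) ^ (1 - α))⁻¹) (𝓝[>] (0:ℝ)) atTop :=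
        h2.comp htw
      refine h3.congr' ?_
      filter_upwards [eventually_nhdsWithin_of_forall htpos] with x hx
      rw [← Real.rpow_neg hx.le, show -(1 - α) = α - 1 by ring]
    have hrest : Tendsto (fun x => θ * α * β / Cθ * Real.exp (γ * x) * (1 - t x) *
        D (θ * (t x) ^ α)) (𝓝[>] (0:ℝ)) (𝓝 (θ * α * β / Cθ * 1 * 1 * D 0)) :=
      (((tendsto_const_nhds.mul hexp).mul h1t).mul hDcomp)
    have hpos : 0 < θ * α * β / Cθ * 1 * 1 * D 0 := by positivity
    have := hpow.atTop_mul_pos hpos hrest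
    refine this.congr fun x => by unfold f; ring
  · -- α = 1
    intro heq
    subst heq
    have : Tendsto (fun x => θ * 1 * β / Cθ * Real.exp (γ * x) * (1 - t x) * (t x) ^ ((1:ℝ) - 1) *
        D (θ * (t x) ^ (1:ℝ))) (𝓝[>] (0:ℝ)) (𝓝 (θ * 1 * β / Cθ * 1 * 1 * 1 * D 0)) := by
      refine ((((tendsto_const_nhds.mul hexp).mul h1t).mul ?_).mul hDcomp)
      simp only [sub_self, Real.rpow_zero]
      exact tendsto_const_nhds
    convert this using 2
    ring
  · -- α > 1
    intro hgt
    have hpow : Tendsto (fun x => (t x) ^ (α - 1)) (𝓝[>] (0:ℝ)) (𝓝 0) := by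
      have hp : 0 < α - 1 := by linarith
      have := (Real.continuousAt_rpow_const 0 (α - 1) (Or.inr hp.le))
      rw [ContinuousAt, Real.zero_rpow hp.ne'] at this
      exact (this.mono_left nhdsWithin_le_nhds).comp htw
    have : Tendsto f (𝓝[>] (0:ℝ)) (𝓝 (θ * α * β / Cθ * 1 * 1 * 0 * D 0)) :=
      ((((tendsto_const_nhds.mul hexp).mul h1t).mul hpow).mul hDcomp)
    simpa using this
end

section
/- For the GGPS hazard rate h with γ > 0, lim_{x→∞} h(x) = ∞. More precisely, h(x) = θαβ e^{γx}(1-t)t^{α-1}C'(θt^α)/(C(θ)-C(θt^α)) with t = 1-e^{-(β/γ)(e^{γx}-1)} tends to infinity as x → ∞, provided C' is continuous and positive at θ. -/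
open Real Filter Set Topology

theorem ggps_hazard_limit_at_infty (α β γ θ : ℝ) (C D : ℝ → ℝ)
    (hα : 0 < α) (hβ : 0 < β) (hγ : 0 < γ) (hθ : 0 < θ)
    (hderiv : ∀ y : ℝ, HasDerivAt C (D y) y)
    (hD : ContinuousAt D θ) (hDθ : 0 < D θ)
    (hlt : ∀ x : ℝ,
      C (θ * (1 - Real.exp (-(β / γ) * (Real.exp (γ * x) - 1))) ^ α) < C θ) :
    let t : ℝ → ℝ := fun x => 1 - Real.exp (-(β / γ) * (Real.exp (γ * x) - 1))
    Tendsto (fun x =>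
        θ * α * β * Real.exp (γ * x) * (1 - t x) * (t x) ^ (α - 1) * D (θ * (t x) ^ α) /
          (C θ - C (θ * (t x) ^ α)))
      atTop atTop := by
  intro t
  have hM1 : (1:ℝ) ≤ max α 1 := le_max_right _ _
  have hM0 : (0:ℝ) < max α 1 := lt_of_lt_of_le one_pos hM1
  set M : ℝ := max α 1 with hMdef
  set K : ℝ := α * β / (8 * M) with hK
  have hK0 : 0 < K := by positivity
  -- exp (γ x) → ∞
  have hexp : Tendsto (fun x => Real.exp (γ * x)) atTop atTop :=
    Real.tendsto_exp_atTop.comp (tendsto_id.const_mul_atTop hγ)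
  -- argument of outer exp → -∞
  have harg : Tendsto (fun x => -(β / γ) * (Real.exp (γ * x) - 1)) atTop atBot := by
    have h1 : Tendsto (fun x => β / γ * (Real.exp (γ * x) + (-1))) atTop atTop :=
      (tendsto_atTop_add_const_right _ (-1) hexp).const_mul_atTop (div_pos hβ hγ)
    have h2 := tendsto_neg_atTop_atBot.comp h1
    exact h2.congr fun x => by simp only [Function.comp_apply]; ring
  have hE0 : Tendsto (fun x => Real.exp (-(β / γ) * (Real.exp (γ * x) - 1))) atTop (nhds 0) :=
    Real.tendsto_exp_atBot.comp harg
  have ht1 : Tendsto t atTop (nhds 1) := by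
    have h2 : Tendsto (fun _ : ℝ => (1:ℝ)) atTop (nhds 1) := tendsto_const_nhds
    have h3 := h2.sub hE0
    rw [sub_zero] at h3
    exact h3
  -- t ^ p → 1
  have hrpow : ∀ p : ℝ, Tendsto (fun x => t x ^ p) atTop (nhds 1) := by
    intro p
    have hc : ContinuousAt (fun s : ℝ => s ^ p) 1 :=
      Real.continuousAt_rpow_const 1 p (Or.inl one_ne_zero)
    have := hc.tendsto.comp ht1
    simp only [Real.one_rpow] at this
    exact this
  have hta : Tendsto (fun x => θ * t x ^ α) atTop (nhds θ) := by
    have h2 : Tendsto (fun _ : ℝ => θ) atTop (nhds θ) := tendsto_const_nhds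
    simpa using h2.mul (hrpow α)
  -- continuity of D: δ-ball
  obtain ⟨δ, hδ0, hδ⟩ : ∃ δ > 0, ∀ y : ℝ, |y - θ| < δ → D y < 2 * D θ := by
    have h2 : {y : ℝ | D y < 2 * D θ} ∈ nhds θ :=
      hD (Iio_mem_nhds (by linarith))
    rcases Metric.mem_nhds_iff.mp h2 with ⟨δ, hδ0, hball⟩
    exact ⟨δ, hδ0, fun y hy => hball (by simpa [Real.dist_eq] using hy)⟩
  -- eventual facts
  have ev1 : ∀ᶠ x in atTop, 0 < t x := by
    filter_upwards [eventually_gt_atTop 0] with x hx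
    have h1 : Real.exp (-(β / γ) * (Real.exp (γ * x) - 1)) < 1 := by
      apply Real.exp_lt_one_iff.mpr
      have h2 : (1:ℝ) < Real.exp (γ * x) := by
        rw [show (1:ℝ) = Real.exp 0 by simp]
        exact Real.exp_lt_exp.mpr (by positivity)
      nlinarith [div_pos hβ hγ]
    simpa [t] using h1
  have ev2 : ∀ᶠ x in atTop, (1:ℝ)/2 ≤ t x ^ (α - 1) :=
    (hrpow (α - 1)).eventually (eventually_ge_nhds (by norm_num : (1:ℝ)/2 < 1))
  have ev3 : ∀ᶠ x in atTop, D θ / 2 ≤ D (θ * t x ^ α) :=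
    (hD.tendsto.comp hta).eventually (eventually_ge_nhds (by linarith : D θ / 2 < D θ))
  have ev4 : ∀ᶠ x in atTop, θ - δ < θ * t x ^ α :=
    hta.eventually (eventually_gt_nhds (by linarith))
  have key : ∀ᶠ x in atTop,
      K * Real.exp (γ * x) ≤
        θ * α * β * Real.exp (γ * x) * (1 - t x) * (t x) ^ (α - 1) * D (θ * (t x) ^ α) /
          (C θ - C (θ * (t x) ^ α)) := by
    filter_upwards [ev1, ev2, ev3, ev4] with x ht0 htp hDge hδx
    set s : ℝ := t x with hs
    have hex : 0 < Real.exp (γ * x) := Real.exp_pos _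
    have hs1 : s < 1 := by
      have := Real.exp_pos (-(β / γ) * (Real.exp (γ * x) - 1))
      simp only [hs, t]; linarith
    have hsα1 : s ^ α < 1 := Real.rpow_lt_one ht0.le hs1 hα
    have hsα0 : 0 < s ^ α := Real.rpow_pos_of_pos ht0 α
    have hsp0 : 0 ≤ s ^ (α - 1) := (Real.rpow_pos_of_pos ht0 _).le
    have hab : θ * s ^ α < θ := by nlinarith
    have hden : 0 < C θ - C (θ * s ^ α) := sub_pos.mpr (hlt x)
    -- MVT
    obtain ⟨c, hc, hslope⟩ := exists_hasDerivAt_eq_slope C D hab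
      (fun y _ => (hderiv y).continuousAt.continuousWithinAt) (fun y _ => hderiv y)
    have hne : θ - θ * s ^ α ≠ 0 := sub_ne_zero.mpr hab.ne'
    have hcC : C θ - C (θ * s ^ α) = D c * (θ - θ * s ^ α) := by
      rw [hslope, div_mul_cancel₀ _ hne]
    have hDc0 : 0 < D c := hslope ▸ div_pos hden (sub_pos.mpr hab)
    have hDc : D c < 2 * D θ := by
      apply hδ
      rw [abs_sub_lt_iff]
      constructor
      · linarith [hc.2]
      · linarith [hc.1, hδx]
    -- 1 - s^α ≤ M * (1 - s)
    have hbound : 1 - s ^ α ≤ M * (1 - s) := by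
      rcases le_total α 1 with h | h
      · have h2 : s ^ (1:ℝ) ≤ s ^ α := Real.rpow_le_rpow_of_exponent_ge ht0 hs1.le h
        rw [Real.rpow_one] at h2
        nlinarith
      · have hb : 1 + α * (s - 1) ≤ (1 + (s - 1)) ^ α :=
          one_add_mul_self_le_rpow_one_add (by linarith) h
        have hαM : α ≤ M := le_max_left _ _
        have h2 : 1 + α * (s - 1) ≤ s ^ α := by simpa using hb
        nlinarith
    have hDenle : C θ - C (θ * s ^ α) ≤ 2 * D θ * θ * M * (1 - s) := by
      rw [hcC]
      calc D c * (θ - θ * s ^ α) = D c * (θ * (1 - s ^ α)) := by ring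
        _ ≤ (2 * D θ) * (θ * (M * (1 - s))) :=
            mul_le_mul hDc.le (mul_le_mul_of_nonneg_left hbound hθ.le)
              (by nlinarith) (by linarith)
        _ = 2 * D θ * θ * M * (1 - s) := by ring
    rw [le_div_iff₀ hden]
    have hf0 : 0 ≤ θ * α * β * Real.exp (γ * x) * (1 - s) :=
      mul_nonneg (by positivity) (by linarith)
    calc K * Real.exp (γ * x) * (C θ - C (θ * s ^ α))
        ≤ K * Real.exp (γ * x) * (2 * D θ * θ * M * (1 - s)) :=
          mul_le_mul_of_nonneg_left hDenle (by positivity)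
      _ = (θ * α * β * Real.exp (γ * x) * (1 - s)) * ((1:ℝ)/2 * (D θ / 2)) := by
          rw [hK, div_mul_eq_mul_div, div_mul_eq_mul_div,
            div_eq_iff (by positivity : (8*M) ≠ 0)]
          ring
      _ ≤ (θ * α * β * Real.exp (γ * x) * (1 - s)) * (s ^ (α - 1) * D (θ * s ^ α)) :=
          mul_le_mul_of_nonneg_left
            (mul_le_mul htp hDge (by linarith) hsp0) hf0
      _ = θ * α * β * Real.exp (γ * x) * (1 - s) * s ^ (α - 1) * D (θ * s ^ α) := by ring
  exact tendsto_atTop_mono' _ key ((tendsto_const_mul_atTop_of_pos hK0).mpr hexp)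
end

section
/- For the generalized Gompertz-geometric (GGG) hazard function h(u) expressed in the variable u = t(x) ∈ (0,1), define τ(u) = (1-α)/u + 2αθ u^{α-1}/(1 - θ u^α) with 0 < θ < 1, α ≥ 1. Then τ is increasing on (0,1), and hence the GGG hazard rate is increasing. -/
open Real Set

theorem ggg_hazard_increasing (α θ : ℝ) (hα : 1 ≤ α) (hθ0 : 0 < θ) (hθ1 : θ < 1) :
    StrictMonoOn
      (fun u : ℝ => (1 - α) / u + 2 * α * θ * u ^ (α - 1) / (1 - θ * u ^ α))
      (Set.Ioo 0 1) := by
  intro x hx y hy hxy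
  obtain ⟨hx0, hx1⟩ := hx
  obtain ⟨hy0, hy1⟩ := hy
  have hα0 : (0:ℝ) < α := by linarith
  -- first term: (1-α)/x ≤ (1-α)/y
  have hinv : 1 / y ≤ 1 / x := one_div_le_one_div_of_le hx0 hxy.le
  have h1 : (1 - α) / x ≤ (1 - α) / y := by
    rw [div_le_div_iff₀ hx0 hy0]
    nlinarith
  -- second term strict
  have hxap : (0:ℝ) < x ^ α := rpow_pos_of_pos hx0 α
  have hyap : (0:ℝ) < y ^ α := rpow_pos_of_pos hy0 α
  have hya1 : y ^ α < 1 := rpow_lt_one hy0.le hy1 hα0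
  have hxa_lt : x ^ α < y ^ α := rpow_lt_rpow hx0.le hxy hα0
  have hdy : 0 < 1 - θ * y ^ α := by nlinarith
  have hdx : 0 < 1 - θ * x ^ α := by nlinarith
  have hdlt : 1 - θ * y ^ α < 1 - θ * x ^ α := by nlinarith
  have hnum_pos : 0 < 2 * α * θ * x ^ (α - 1) := by
    have := rpow_pos_of_pos hx0 (α - 1)
    positivity
  have hnum_le : 2 * α * θ * x ^ (α - 1) ≤ 2 * α * θ * y ^ (α - 1) := by
    have h := rpow_le_rpow hx0.le hxy.le (by linarith : 0 ≤ α - 1)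
    have h2 : (0:ℝ) ≤ 2 * α * θ := by positivity
    exact mul_le_mul_of_nonneg_left h h2
  have h2 : 2 * α * θ * x ^ (α - 1) / (1 - θ * x ^ α)
      < 2 * α * θ * y ^ (α - 1) / (1 - θ * y ^ α) := by
    calc 2 * α * θ * x ^ (α - 1) / (1 - θ * x ^ α)
        < 2 * α * θ * x ^ (α - 1) / (1 - θ * y ^ α) :=
          div_lt_div_of_pos_left hnum_pos hdy hdlt
      _ ≤ 2 * α * θ * y ^ (α - 1) / (1 - θ * y ^ α) :=
          by gcongr
  dsimp only
  linarith
end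

section
/- For the generalized Gompertz-Poisson (GGP) case, define η(u) = log h(u) where h(u) = θαβ u^{α-1} e^{θu^α}/(e^θ - e^{θu^α}) on u ∈ (0,1). If α ≥ 1, then η'(u) = (α-1)/u + αθ e^θ u^{α-1}/(e^θ - e^{θu^α}) > 0 for all u ∈ (0,1), so the GGP hazard rate is increasing. -/
open Real Set

theorem ggp_hazard_increasing (α β θ : ℝ) (hα : 1 ≤ α) (hβ : 0 < β) (hθ : 0 < θ) :
    (∀ u ∈ Set.Ioo (0:ℝ) 1,
      0 < (α - 1) / u + α * θ * Real.exp θ * u ^ (α - 1) /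
        (Real.exp θ - Real.exp (θ * u ^ α))) ∧
    StrictMonoOn
      (fun u : ℝ => θ * α * β * u ^ (α - 1) * Real.exp (θ * u ^ α) /
        (Real.exp θ - Real.exp (θ * u ^ α)))
      (Set.Ioo 0 1) := by
  have hα0 : 0 < α := lt_of_lt_of_le one_pos hα
  have hden : ∀ u ∈ Set.Ioo (0:ℝ) 1, 0 < Real.exp θ - Real.exp (θ * u ^ α) := by
    intro u hu
    have h1 : u ^ α < 1 := Real.rpow_lt_one (le_of_lt hu.1) hu.2 hα0
    have : θ * u ^ α < θ := by nlinarith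
    exact sub_pos.mpr (Real.exp_lt_exp.mpr this)
  constructor
  · intro u hu
    have h1 : 0 ≤ (α - 1) / u := div_nonneg (by linarith) (le_of_lt hu.1)
    have h2 : 0 < α * θ * Real.exp θ * u ^ (α - 1) /
        (Real.exp θ - Real.exp (θ * u ^ α)) := by
      have hup := Real.rpow_pos_of_pos hu.1 (α - 1)
      apply div_pos (by positivity) (hden u hu)
    linarith
  · intro u hu v hv huv
    have hA : u ^ (α - 1) * Real.exp (θ * u ^ α) <
        v ^ (α - 1) * Real.exp (θ * v ^ α) := by
      have h1 : u ^ (α - 1) ≤ v ^ (α - 1) :=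
        Real.rpow_le_rpow (le_of_lt hu.1) (le_of_lt huv) (by linarith)
      have h2 : u ^ α < v ^ α := Real.rpow_lt_rpow (le_of_lt hu.1) huv hα0
      have h3 : Real.exp (θ * u ^ α) < Real.exp (θ * v ^ α) :=
        Real.exp_lt_exp.mpr (by nlinarith)
      have hup : (0:ℝ) < u ^ (α - 1) := Real.rpow_pos_of_pos hu.1 _
      nlinarith [Real.exp_pos (θ * u ^ α), Real.exp_pos (θ * v ^ α)]
    have hD : Real.exp θ - Real.exp (θ * v ^ α) ≤ Real.exp θ - Real.exp (θ * u ^ α) := by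
      have h2 : u ^ α < v ^ α := Real.rpow_lt_rpow (le_of_lt hu.1) huv hα0
      have : Real.exp (θ * u ^ α) < Real.exp (θ * v ^ α) :=
        Real.exp_lt_exp.mpr (by nlinarith)
      linarith
    have hC : 0 < θ * α * β := by positivity
    have hN : θ * α * β * u ^ (α - 1) * Real.exp (θ * u ^ α) <
        θ * α * β * v ^ (α - 1) * Real.exp (θ * v ^ α) := by
      have := mul_lt_mul_of_pos_left hA hC
      nlinarith [this]
    have hup := Real.rpow_pos_of_pos hu.1 (α - 1)
    have hvp := Real.rpow_pos_of_pos hv.1 (α - 1)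
    have h0 : 0 ≤ θ * α * β * v ^ (α - 1) * Real.exp (θ * v ^ α) := by positivity
    exact div_lt_div₀ hN hD h0 (hden v hv)
end
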